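/- There exist constants c_1, c_2 > 0, independent of τ (equivalently of δ = τ^{-1}), of J_1, J_2, of a, and of ℓ, such that the following holds: for every a ∈ ℐ and ℓ ∈ ℕ_0^* with μ = a + ℓ ∈ 𝒩 and ν = a − ℓ ∈ 𝒩, and for every η' ∈ J̃_1 and η'' ∈ J̃_2 with η = η' + η'', the rotated slice-sum satisfies ℛ_{−a δ^{1/2}}(u_{μ,J_1}^{η'} + u_{ν,J_2}^{η''}) ⊆ R(p_{ℓ,δ}(η',η''); c_1 ℓ_* δ, c_2 δ^{1/2}). -/

import Mathlib

set_option maxHeartbeats 1000000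


open Set Pointwise

noncomputable def GammaD (δ μ : ℝ) : Set ℂ :=
  {ξ : ℂ | ξ ≠ 0 ∧ μ * Real.sqrt δ ≤ ξ.arg ∧ ξ.arg < (μ + 1) * Real.sqrt δ}

def calND (δ : ℝ) : Set ℤ :=
  {μ : ℤ | |(μ : ℝ)| ≤ Real.pi / 8 * (Real.sqrt δ)⁻¹ - 1}

noncomputable def uSetD (δ μ : ℝ) (J : Set ℝ) : Set (ℂ × ℝ) :=
  {p : ℂ × ℝ | |p.2 - ‖p.1‖| ≤ δ ∧ p.1 ∈ GammaD δ μ ∧ ‖p.1‖ ∈ J}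

noncomputable def uSliceD (δ μ : ℝ) (J : Set ℝ) (η : ℝ) : Set ℂ :=
  {ξ : ℂ | (ξ, η) ∈ uSetD δ μ J}

noncomputable def calID (δ : ℝ) : Set ℝ :=
  {a : ℝ | ∃ μ ∈ calND δ, ∃ ν ∈ calND δ, a = ((μ : ℝ) + (ν : ℝ)) / 2}

noncomputable def rot (σ : ℝ) : ℂ → ℂ := fun z => Complex.exp (σ * Complex.I) * z

noncomputable def pPt (δ ℓ η' η'' : ℝ) : ℂ :=
  ⟨(η' + η'') * Real.cos (ℓ * Real.sqrt δ), (η' - η'') * Real.sin (ℓ * Real.sqrt δ)⟩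

def rect (p : ℂ) (a b : ℝ) : Set ℂ :=
  {z : ℂ | |z.re - p.re| ≤ a ∧ |z.im - p.im| ≤ b}

lemma rot_re_im (σ : ℝ) (ξ : ℂ) :
    (Complex.exp (↑σ * Complex.I) * ξ).re = ‖ξ‖ * Real.cos (ξ.arg + σ) ∧
    (Complex.exp (↑σ * Complex.I) * ξ).im = ‖ξ‖ * Real.sin (ξ.arg + σ) := by
  have h : Complex.exp (↑σ * Complex.I) * ξ
      = (‖ξ‖ : ℂ) * Complex.exp (↑(ξ.arg + σ) * Complex.I) := by
    push_cast
    rw [add_mul, Complex.exp_add]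
    nth_rewrite 1 [← Complex.norm_mul_exp_arg_mul_I ξ]
    ring
  rw [h]
  constructor
  · rw [Complex.re_ofReal_mul, Complex.exp_ofReal_mul_I_re]
  · rw [Complex.im_ofReal_mul, Complex.exp_ofReal_mul_I_im]

lemma est (s t φ r η₀ : ℝ) (hs : 0 ≤ s)
    (hφt : |φ - t| ≤ s) (hr : |η₀ - r| ≤ s ^ 2) (hη : |η₀| ≤ 3) :
    |r * Real.cos φ - η₀ * Real.cos t| ≤ s ^ 2 + 3 * ((|t| + s / 2) * s) ∧
    |r * Real.sin φ - η₀ * Real.sin t| ≤ s ^ 2 + 3 * s := by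
  have hrη : |r - η₀| ≤ s ^ 2 := by rwa [abs_sub_comm]
  have hsum : |(φ + t) / 2| ≤ |t| + s / 2 := by
    have : |φ + t| ≤ s + 2 * |t| := by
      calc |φ + t| = |(φ - t) + 2 * t| := by ring_nf
        _ ≤ |φ - t| + |2 * t| := abs_add_le _ _
        _ ≤ s + 2 * |t| := by rw [abs_mul]; simp; linarith [abs_nonneg t]
    rw [abs_div]
    simp only [abs_two]
    linarith
  have hdiff : |(φ - t) / 2| ≤ s / 2 := by
    rw [abs_div]; simp only [abs_two]; linarith
  have hcos : |Real.cos φ - Real.cos t| ≤ (|t| + s / 2) * s := by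
    rw [Real.cos_sub_cos]
    rw [abs_mul, abs_mul]
    have h1 := Real.abs_sin_le_abs (x := (φ + t) / 2)
    have h2 := Real.abs_sin_le_abs (x := (φ - t) / 2)
    have := abs_nonneg ((φ + t) / 2)
    have := abs_nonneg (Real.sin ((φ - t) / 2))
    have := abs_nonneg (Real.sin ((φ + t) / 2))
    calc |(-2 : ℝ)| * |Real.sin ((φ + t) / 2)| * |Real.sin ((φ - t) / 2)|
        ≤ 2 * (|t| + s / 2) * (s / 2) := by
          rw [abs_neg, abs_two]
          have hA : |Real.sin ((φ + t) / 2)| ≤ |t| + s / 2 := le_trans h1 hsum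
          have hB : |Real.sin ((φ - t) / 2)| ≤ s / 2 := le_trans h2 hdiff
          have h0 : (0:ℝ) ≤ |t| + s / 2 := by positivity
          nlinarith
      _ = (|t| + s / 2) * s := by ring
  have hsin : |Real.sin φ - Real.sin t| ≤ s := by
    rw [Real.sin_sub_sin, abs_mul, abs_mul]
    have h2 := Real.abs_sin_le_abs (x := (φ - t) / 2)
    have h3 := Real.abs_cos_le_one ((φ + t) / 2)
    have := abs_nonneg (Real.sin ((φ - t) / 2))
    calc |(2:ℝ)| * |Real.sin ((φ - t) / 2)| * |Real.cos ((φ + t) / 2)|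
        ≤ 2 * (s / 2) * 1 := by
          rw [abs_two]
          nlinarith [le_trans h2 hdiff]
      _ = s := by ring
  constructor
  · have e : r * Real.cos φ - η₀ * Real.cos t
        = (r - η₀) * Real.cos φ + η₀ * (Real.cos φ - Real.cos t) := by ring
    rw [e]
    calc |(r - η₀) * Real.cos φ + η₀ * (Real.cos φ - Real.cos t)|
        ≤ |(r - η₀) * Real.cos φ| + |η₀ * (Real.cos φ - Real.cos t)| := abs_add_le _ _
      _ ≤ s ^ 2 + 3 * ((|t| + s / 2) * s) := by
          rw [abs_mul, abs_mul]
          have h1 := Real.abs_cos_le_one φ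
          have := abs_nonneg (r - η₀)
          have := abs_nonneg η₀
          have := abs_nonneg (Real.cos φ - Real.cos t)
          have h0 : (0:ℝ) ≤ (|t| + s / 2) * s := by positivity
          nlinarith
  · have e : r * Real.sin φ - η₀ * Real.sin t
        = (r - η₀) * Real.sin φ + η₀ * (Real.sin φ - Real.sin t) := by ring
    rw [e]
    calc |(r - η₀) * Real.sin φ + η₀ * (Real.sin φ - Real.sin t)|
        ≤ |(r - η₀) * Real.sin φ| + |η₀ * (Real.sin φ - Real.sin t)| := abs_add_le _ _
      _ ≤ s ^ 2 + 3 * s := by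
          rw [abs_mul, abs_mul]
          have h1 := Real.abs_sin_le_one φ
          have := abs_nonneg (r - η₀)
          have := abs_nonneg η₀
          have := abs_nonneg (Real.sin φ - Real.sin t)
          nlinarith

theorem statement10 :
    ∃ c₁ c₂ : ℝ, 0 < c₁ ∧ 0 < c₂ ∧
      ∀ δ : ℝ, 0 < δ → δ < 1 / 1000000 →
      ∀ α₁ β₁ α₂ β₂ : ℝ,
        1 ≤ α₁ → α₁ ≤ β₁ → β₁ ≤ 2 → β₁ - α₁ ≤ Real.sqrt δ →
        1 ≤ α₂ → α₂ ≤ β₂ → β₂ ≤ 2 → β₂ - α₂ ≤ Real.sqrt δ →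
        ∀ a ∈ calID δ, ∀ k : ℕ, ∀ μ ν : ℤ,
          (μ : ℝ) = a + (k : ℝ) / 2 → (ν : ℝ) = a - (k : ℝ) / 2 →
          μ ∈ calND δ → ν ∈ calND δ →
        ∀ η' ∈ Icc (α₁ - δ) (β₁ + δ),
        ∀ η'' ∈ Icc (α₂ - δ) (β₂ + δ),
          rot (-(a * Real.sqrt δ)) ''
              (uSliceD δ (μ : ℝ) (Icc α₁ β₁) η' + uSliceD δ (ν : ℝ) (Icc α₂ β₂) η'')
            ⊆ rect (pPt δ ((k : ℝ) / 2) η' η'')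
                (c₁ * max ((k : ℝ) / 2) (1 / 2) * δ) (c₂ * Real.sqrt δ) := by
  refine ⟨16, 8, by norm_num, by norm_num, ?_⟩
  intro δ hδ hδ' α₁ β₁ α₂ β₂ h1α h1ab h1β _ h2α h2ab h2β _ a _ k μ ν hμ hν _ _
    η' hη' η'' hη'' z hz
  obtain ⟨w, hw, rfl⟩ := hz
  rw [Set.mem_add] at hw
  obtain ⟨x, hx, y, hy, rfl⟩ := hw
  set s := Real.sqrt δ with hs_def
  have hs : 0 < s := Real.sqrt_pos.mpr hδ
  have hδ1 : δ ≤ 1 := by linarith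
  have hs1 : s ≤ 1 := Real.sqrt_le_one.mpr hδ1
  have hδs : δ = s ^ 2 := (Real.sq_sqrt hδ.le).symm
  obtain ⟨hx1, ⟨hx0, hxa1, hxa2⟩, hx3⟩ := hx
  obtain ⟨hy1, ⟨hy0, hya1, hya2⟩, hy3⟩ := hy
  set ℓ : ℝ := (k : ℝ) / 2 with hℓ_def
  have hℓ0 : 0 ≤ ℓ := by positivity
  -- bounds on η', η''
  have hη'1 : 1 - δ ≤ η' := by have := hη'.1; linarith
  have hη'2 : η' ≤ 2 + δ := by have := hη'.2; linarith
  have hη''1 : 1 - δ ≤ η'' := by have := hη''.1; linarith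
  have hη''2 : η'' ≤ 2 + δ := by have := hη''.2; linarith
  have haη' : |η'| ≤ 3 := by rw [abs_le]; constructor <;> linarith
  have haη'' : |η''| ≤ 3 := by rw [abs_le]; constructor <;> linarith
  -- angles
  have hφx : |x.arg + -(a * s) - ℓ * s| ≤ s := by
    have hμ1 : (μ : ℝ) * s = a * s + ℓ * s := by rw [hμ]; ring
    have hμ2 : ((μ : ℝ) + 1) * s = a * s + ℓ * s + s := by rw [hμ]; ring
    rw [abs_le]
    constructor <;> [linarith [hxa1, hμ1]; linarith [hxa2, hμ2]]
  have hφy : |y.arg + -(a * s) - (-(ℓ * s))| ≤ s := by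
    have hν1 : (ν : ℝ) * s = a * s - ℓ * s := by rw [hν]; ring
    have hν2 : ((ν : ℝ) + 1) * s = a * s - ℓ * s + s := by rw [hν]; ring
    rw [abs_le]
    constructor <;> [linarith [hya1, hν1]; linarith [hya2, hν2]]
  have hrx : |η' - ‖x‖| ≤ s ^ 2 := by rw [← hδs]; exact hx1
  have hry : |η'' - ‖y‖| ≤ s ^ 2 := by rw [← hδs]; exact hy1
  obtain ⟨hxcos, hxsin⟩ := est s (ℓ * s) (x.arg + -(a * s)) (‖x‖) η' hs.le hφx hrx haη'
  obtain ⟨hycos, hysin⟩ := est s (-(ℓ * s)) (y.arg + -(a * s)) (‖y‖) η'' hs.le hφy hry haη''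
  -- compute the rotated point
  obtain ⟨hxre, hxim⟩ := rot_re_im (-(a * s)) x
  obtain ⟨hyre, hyim⟩ := rot_re_im (-(a * s)) y
  have hzre : (rot (-(a * s)) (x + y)).re
      = ‖x‖ * Real.cos (x.arg + -(a * s))
        + ‖y‖ * Real.cos (y.arg + -(a * s)) := by
    simp only [rot, mul_add, Complex.add_re]
    rw [← hxre, ← hyre]
  have hzim : (rot (-(a * s)) (x + y)).im
      = ‖x‖ * Real.sin (x.arg + -(a * s))
        + ‖y‖ * Real.sin (y.arg + -(a * s)) := by
    simp only [rot, mul_add, Complex.add_im]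
    rw [← hxim, ← hyim]
  have hpre : (pPt δ ℓ η' η'').re = η' * Real.cos (ℓ * s) + η'' * Real.cos (-(ℓ * s)) := by
    simp [pPt, Real.cos_neg, ← hs_def]; ring
  have hpim : (pPt δ ℓ η' η'').im = η' * Real.sin (ℓ * s) + η'' * Real.sin (-(ℓ * s)) := by
    simp [pPt, Real.sin_neg, ← hs_def]; ring
  have habs_t : |ℓ * s| = ℓ * s := abs_of_nonneg (by positivity)
  have habs_t' : |(-(ℓ * s))| = ℓ * s := by rw [abs_neg]; exact habs_t
  rw [habs_t] at hxcos
  rw [habs_t'] at hycos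
  constructor
  · -- real part
    rw [hzre, hpre]
    have e : ‖x‖ * Real.cos (x.arg + -(a * s))
          + ‖y‖ * Real.cos (y.arg + -(a * s))
          - (η' * Real.cos (ℓ * s) + η'' * Real.cos (-(ℓ * s)))
        = (‖x‖ * Real.cos (x.arg + -(a * s)) - η' * Real.cos (ℓ * s))
          + (‖y‖ * Real.cos (y.arg + -(a * s)) - η'' * Real.cos (-(ℓ * s))) := by
      ring
    rw [e]
    have := abs_add_le (‖x‖ * Real.cos (x.arg + -(a * s)) - η' * Real.cos (ℓ * s))
      (‖y‖ * Real.cos (y.arg + -(a * s)) - η'' * Real.cos (-(ℓ * s)))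
    have hmax : ℓ ≤ max ℓ (1/2) := le_max_left _ _
    have hmax2 : (1/2 : ℝ) ≤ max ℓ (1/2) := le_max_right _ _
    have hfin : s ^ 2 + 3 * ((ℓ * s + s / 2) * s) + (s ^ 2 + 3 * ((ℓ * s + s / 2) * s))
        ≤ 16 * max ℓ (1/2) * δ := by
      have hs2 : (0:ℝ) ≤ s ^ 2 := by positivity
      have key : 6 * ℓ + 5 ≤ 16 * max ℓ (1/2) := by
        rcases le_total ℓ (1/2) with h | h
        · rw [max_eq_right h]; linarith
        · rw [max_eq_left h]; linarith
      have e2 : s ^ 2 + 3 * ((ℓ * s + s / 2) * s) + (s ^ 2 + 3 * ((ℓ * s + s / 2) * s))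
          = (6 * ℓ + 5) * s ^ 2 := by ring
      rw [e2, hδs]
      exact mul_le_mul_of_nonneg_right key hs2
    calc _ ≤ _ := this
      _ ≤ s ^ 2 + 3 * ((ℓ * s + s / 2) * s) + (s ^ 2 + 3 * ((ℓ * s + s / 2) * s)) := by
          linarith [hxcos, hycos]
      _ ≤ 16 * max ℓ (1/2) * δ := hfin
  · -- imaginary part
    rw [hzim, hpim]
    have e : ‖x‖ * Real.sin (x.arg + -(a * s))
          + ‖y‖ * Real.sin (y.arg + -(a * s))
          - (η' * Real.sin (ℓ * s) + η'' * Real.sin (-(ℓ * s)))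
        = (‖x‖ * Real.sin (x.arg + -(a * s)) - η' * Real.sin (ℓ * s))
          + (‖y‖ * Real.sin (y.arg + -(a * s)) - η'' * Real.sin (-(ℓ * s))) := by
      ring
    rw [e]
    have := abs_add_le (‖x‖ * Real.sin (x.arg + -(a * s)) - η' * Real.sin (ℓ * s))
      (‖y‖ * Real.sin (y.arg + -(a * s)) - η'' * Real.sin (-(ℓ * s)))
    calc _ ≤ _ := this
      _ ≤ (s ^ 2 + 3 * s) + (s ^ 2 + 3 * s) := by linarith [hxsin, hysin]
      _ ≤ 8 * s := by
          have hss : s * s ≤ s := by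
            have := mul_le_mul_of_nonneg_left hs1 hs.le
            simpa using this
          have : s ^ 2 ≤ s := by rw [pow_two]; exact hss
          linarith
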